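/- Let k ≥ 1, let G' be a k-sparsifier of a finite graph G, and let (T,bag) be a k-lean tree decomposition of G'. Then (T,bag) is also a k-lean tree decomposition of G. -/

import Mathlib

open Finset SimpleGraph

variable {V : Type} [Fintype V] [DecidableEq V]

/-- `(A, B)` is a vertex cut of `G`. -/
def IsVertexCut (G : SimpleGraph V) (A B : Finset V) : Prop :=
  A ∪ B = Finset.univ ∧
  ∀ u v : V, u ∈ A → u ∉ B → v ∈ B → v ∉ A → ¬ G.Adj u v

/-- `G'` is a `k`-sparsifier of `G`: a subgraph on the same vertex set such that every
vertex cut of `G'` of order `< k` is also a vertex cut of `G`. -/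
def IsSparsifier (G G' : SimpleGraph V) (k : ℕ) : Prop :=
  G' ≤ G ∧ ∀ A B : Finset V, IsVertexCut G' A B → (A ∩ B).card < k → IsVertexCut G A B

/-- `(T, bag)` is a tree decomposition of the graph `G`. -/
def IsTreeDecomp (G : SimpleGraph V) {W : Type} (T : SimpleGraph W)
    (bag : W → Finset V) : Prop :=
  T.IsTree ∧
  (∀ u v : V, G.Adj u v → ∃ t : W, u ∈ bag t ∧ v ∈ bag t) ∧
  (∀ v : V, (T.induce {t : W | v ∈ bag t}).Connected)

/-- `S` is an `(X1, X2)`-separator in `G`. -/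
def IsSeparator (G : SimpleGraph V) (X1 X2 S : Finset V) : Prop :=
  ∀ u v : V, u ∈ X1 → v ∈ X2 → ∀ p : G.Walk u v, ∃ w ∈ p.support, w ∈ S

/-- The tree decomposition `(T, bag)` of `G` is `k`-lean. -/
def IsKLean (G : SimpleGraph V) {W : Type} (T : SimpleGraph W)
    (bag : W → Finset V) (k : ℕ) : Prop :=
  (∀ a b : W, T.Adj a b → (bag a ∩ bag b).card < k) ∧
  (∀ t1 t2 : W, ∀ X1 X2 : Finset V, X1 ⊆ bag t1 → X2 ⊆ bag t2 →
    ∀ S : Finset V, IsSeparator G X1 X2 S →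
      S.card < min (min X1.card X2.card) k →
      ∃ p : T.Walk t1 t2, p.IsPath ∧
        ∃ a b : W, s(a, b) ∈ p.edges ∧ (bag a ∩ bag b).card ≤ S.card)

section Aux

variable {W : Type} {T : SimpleGraph W}

/-- After deleting edge `st`, reaching `s` or `t` propagates back along walks. -/
private lemma side_step (s t : W) : ∀ {a b : W} (_ : T.Walk a b),
    ((T.deleteEdges {s(s,t)}).Reachable b s ∨ (T.deleteEdges {s(s,t)}).Reachable b t) →
    ((T.deleteEdges {s(s,t)}).Reachable a s ∨ (T.deleteEdges {s(s,t)}).Reachable a t) := by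
  intro a b p
  induction p with
  | nil => exact id
  | @cons a c b h q ih =>
    intro hb
    by_cases he : s(a, c) = s(s, t)
    · rcases Sym2.eq_iff.mp he with ⟨h1, h2⟩ | ⟨h1, h2⟩
      · left; rw [h1]
      · right; rw [h1]
    · have hadj : (T.deleteEdges {s(s,t)}).Adj a c := by
        rw [deleteEdges_adj]
        exact ⟨h, by simpa using he⟩
      rcases ih hb with h' | h'
      · exact Or.inl (hadj.reachable.trans h')
      · exact Or.inr (hadj.reachable.trans h')

/-- Every vertex reaches `s` or `t` after deleting the edge `st` of a connected graph. -/
private lemma side_total (hc : T.Connected) (s t w : W) :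
    (T.deleteEdges {s(s,t)}).Reachable w s ∨ (T.deleteEdges {s(s,t)}).Reachable w t := by
  obtain ⟨p⟩ := hc w s
  exact side_step s t p (Or.inl (Reachable.refl _))

/-- A walk from the `s`-side to the `t`-side of the deleted edge `st` passes through
both `s` and `t`. -/
private lemma cross_hits (s t : W) : ∀ {a b : W} (p : T.Walk a b),
    (T.deleteEdges {s(s,t)}).Reachable a s →
    ¬ (T.deleteEdges {s(s,t)}).Reachable b s →
    s ∈ p.support ∧ t ∈ p.support := by
  intro a b p
  induction p with
  | nil => intro ha hb; exact absurd ha hb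
  | @cons a c b h q ih =>
    intro ha hb
    by_cases he : s(a, c) = s(s, t)
    · rcases Sym2.eq_iff.mp he with ⟨h1, h2⟩ | ⟨h1, h2⟩
      · constructor
        · rw [Walk.support_cons, ← h1]; exact List.mem_cons_self
        · rw [Walk.support_cons]; exact List.mem_cons_of_mem _ (h2 ▸ q.start_mem_support)
      · constructor
        · rw [Walk.support_cons]; exact List.mem_cons_of_mem _ (h2 ▸ q.start_mem_support)
        · rw [Walk.support_cons, ← h1]; exact List.mem_cons_self
    · have hadj : (T.deleteEdges {s(s,t)}).Adj a c := by
        rw [deleteEdges_adj]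
        exact ⟨h, by simpa using he⟩
      have hres := ih (hadj.symm.reachable.trans ha) hb
      exact ⟨List.mem_cons_of_mem _ hres.1, List.mem_cons_of_mem _ hres.2⟩

/-- Along a path from a vertex satisfying `P` to one not satisfying `P` there is an edge `st`
switching from `P` to `¬P`, and the endpoint of the path reaches `t` avoiding that edge. -/
private lemma exists_switch {P : W → Prop} :
    ∀ {a b : W} (p : T.Walk a b), p.IsPath → P a → ¬ P b →
    ∃ s t : W, T.Adj s t ∧ P s ∧ ¬ P t ∧ (T.deleteEdges {s(s,t)}).Reachable b t := by
  intro a b p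
  induction p with
  | nil => intro _ ha hb; exact absurd ha hb
  | @cons a c b h q ih =>
    intro hp ha hb
    by_cases hc : P c
    · exact ih ((Walk.cons_isPath_iff h q).mp hp).1 hc hb
    · refine ⟨a, c, h, ha, hc, ?_⟩
      have hnot : ∀ e ∈ q.edges, e ∉ ({s(a,c)} : Set (Sym2 W)) := by
        intro e heq hmem
        rw [Set.mem_singleton_iff] at hmem
        subst hmem
        exact ((Walk.cons_isPath_iff h q).mp hp).2 (q.fst_mem_support_of_mem_edges heq)
      exact ((q.toDeleteEdges _ hnot).reverse).reachable

/-- A connected induced subgraph gives connecting walks inside the vertex set. -/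
private lemma induce_walk {S : Set W} (hc : (T.induce S).Connected) {w₁ w₂ : W}
    (h1 : w₁ ∈ S) (h2 : w₂ ∈ S) :
    ∃ p : T.Walk w₁ w₂, ∀ x ∈ p.support, x ∈ S := by
  obtain ⟨q⟩ := hc ⟨w₁, h1⟩ ⟨w₂, h2⟩
  refine ⟨q.map (SimpleGraph.Embedding.induce S).toHom, ?_⟩
  intro x hx
  replace hx : x ∈ q.support.map (SimpleGraph.Embedding.induce (G := T) S).toHom := by
    rw [← Walk.support_map]; exact hx
  obtain ⟨y, _, rfl⟩ := List.mem_map.mp hx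
  exact y.2

end Aux

/-- If `G'` is a `k`-sparsifier of `G` (with `k ≥ 1`) and `(T, bag)` is a `k`-lean tree
decomposition of `G'`, then `(T, bag)` is also a `k`-lean tree decomposition of `G`. -/
theorem sparsifier_kLean {W : Type} [Fintype W] (G G' : SimpleGraph V) (k : ℕ)
    (hk : 1 ≤ k) (hsp : IsSparsifier G G' k)
    (T : SimpleGraph W) (bag : W → Finset V)
    (hTD : IsTreeDecomp G' T bag) (hlean : IsKLean G' T bag k) :
    IsTreeDecomp G T bag ∧ IsKLean G T bag k := by
  classical
  obtain ⟨htree, hedge, hconn⟩ := hTD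
  -- every vertex is in some bag
  have hmem : ∀ x : V, ∃ w : W, x ∈ bag w := by
    intro x
    obtain ⟨⟨w, hw⟩⟩ := (hconn x).nonempty
    exact ⟨w, hw⟩
  -- Edge coverage for G
  have hcover : ∀ u v : V, G.Adj u v → ∃ t : W, u ∈ bag t ∧ v ∈ bag t := by
    intro u v huv
    by_contra hno
    push_neg at hno
    obtain ⟨tu, htu⟩ := hmem u
    obtain ⟨tv, htv⟩ := hmem v
    obtain ⟨p0⟩ := htree.isConnected tu tv
    have hp := p0.toPath.2
    have hntv : ¬ u ∈ bag tv := fun h => hno tv h htv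
    obtain ⟨s, t, hadj, hs, ht, hreach⟩ :=
      exists_switch (P := fun w => u ∈ bag w) (p0.toPath : T.Walk tu tv) hp htu hntv
    set del := T.deleteEdges {s(s,t)} with hdel
    have hnb : ¬ del.Reachable s t :=
      (isBridge_iff.mp (isAcyclic_iff_forall_adj_isBridge.mp htree.IsAcyclic hadj))
    -- the two sides of the cut
    set A : Finset V := Finset.univ.filter (fun x => ∃ w, del.Reachable w s ∧ x ∈ bag w) with hA
    set B : Finset V := Finset.univ.filter (fun x => ∃ w, del.Reachable w t ∧ x ∈ bag w) with hB
    have hAmem : ∀ x : V, x ∈ A ↔ ∃ w, del.Reachable w s ∧ x ∈ bag w := by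
      intro x; simp [hA]
    have hBmem : ∀ x : V, x ∈ B ↔ ∃ w, del.Reachable w t ∧ x ∈ bag w := by
      intro x; simp [hB]
    have hABsub : A ∩ B ⊆ bag s ∩ bag t := by
      intro x hx
      rw [Finset.mem_inter] at hx
      obtain ⟨w₁, hw₁r, hw₁b⟩ := (hAmem x).mp hx.1
      obtain ⟨w₂, hw₂r, hw₂b⟩ := (hBmem x).mp hx.2
      obtain ⟨q, hq⟩ := induce_walk (hconn x) (show w₁ ∈ {w : W | x ∈ bag w} from hw₁b)
        (show w₂ ∈ {w : W | x ∈ bag w} from hw₂b)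
      have hb2 : ¬ del.Reachable w₂ s := fun h => hnb (h.symm.trans hw₂r)
      obtain ⟨hsup_s, hsup_t⟩ := cross_hits s t q hw₁r hb2
      exact Finset.mem_inter.mpr ⟨hq s hsup_s, hq t hsup_t⟩
    have hcut : IsVertexCut G' A B := by
      constructor
      · apply Finset.eq_univ_iff_forall.mpr
        intro x
        obtain ⟨w, hw⟩ := hmem x
        rcases side_total htree.isConnected s t w with h' | h'
        · exact Finset.mem_union_left _ ((hAmem x).mpr ⟨w, h', hw⟩)
        · exact Finset.mem_union_right _ ((hBmem x).mpr ⟨w, h', hw⟩)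
      · intro a b haA haB hbB hbA hab
        obtain ⟨w, hwa, hwb⟩ := hedge a b hab
        rcases side_total htree.isConnected s t w with h' | h'
        · exact hbA ((hAmem b).mpr ⟨w, h', hwb⟩)
        · exact haB ((hBmem a).mpr ⟨w, h', hwa⟩)
    have hcard : (A ∩ B).card < k :=
      lt_of_le_of_lt (Finset.card_le_card hABsub) (hlean.1 s t hadj)
    have hcutG : IsVertexCut G A B := hsp.2 A B hcut hcard
    have huA : u ∈ A := (hAmem u).mpr ⟨s, Reachable.refl _, hs⟩
    have huB : u ∉ B := by
      intro h
      have := hABsub (Finset.mem_inter.mpr ⟨huA, h⟩)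
      exact ht (Finset.mem_inter.mp this).2
    have hvB : v ∈ B := (hBmem v).mpr ⟨tv, hreach, htv⟩
    have hvA : v ∉ A := by
      intro h
      have := hABsub (Finset.mem_inter.mpr ⟨h, hvB⟩)
      exact hno s hs (by simpa using (Finset.mem_inter.mp this).1)
    exact hcutG.2 u v huA huB hvB hvA huv
  refine ⟨⟨htree, hcover, hconn⟩, hlean.1, ?_⟩
  intro t1 t2 X1 X2 hX1 hX2 S hsep hScard
  -- separators of G are separators of G'
  have hsep' : IsSeparator G' X1 X2 S := by
    intro u v hu hv p
    obtain ⟨w, hw, hwS⟩ := hsep u v hu hv (p.mapLe hsp.1)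
    refine ⟨w, ?_, hwS⟩
    rw [Walk.mapLe, Walk.support_map] at hw
    obtain ⟨y, hy, rfl⟩ := List.mem_map.mp hw
    simpa [Hom.ofLE_apply] using hy
  exact hlean.2 t1 t2 X1 X2 hX1 hX2 S hsep' hScard
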